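/- Let p ∈ [1,∞]. If B ∈ M_n(ℂ) is an extreme point of the unit ball of the ℓ_{1,p}-norm (i.e., of {A ∈ M_n(ℂ) : ℓ_{1,p}(A) ≤ 1}), then B has exactly one nonzero column. -/

import Mathlib

open scoped ENNReal ComplexOrder
open Matrix

noncomputable section

/-- The `ℓ_p` norm of a complex vector, `p ∈ [1,∞]`. -/
def lpV (p : ℝ≥0∞) {n : ℕ} (v : Fin n → ℂ) : ℝ :=
  if p = ∞ then ⨆ i, ‖v i‖ else (∑ i, ‖v i‖ ^ p.toReal) ^ (1 / p.toReal)

/-- The `ℓ_{q,p}` norm of a complex matrix: the `ℓ_q` norm of the vector of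
`ℓ_p` norms of its columns. -/
def lqp (q p : ℝ≥0∞) {m n : ℕ} (A : Matrix (Fin m) (Fin n) ℂ) : ℝ :=
  lpV q fun j => ((lpV p fun i => A i j : ℝ) : ℂ)

/-- A density matrix: positive semidefinite with trace one. -/
def IsDensity {n : ℕ} (ρ : Matrix (Fin n) (Fin n) ℂ) : Prop :=
  ρ.PosSemidef ∧ ρ.trace = 1

/-- An incoherent (classical) state: a diagonal density matrix. -/
def IsIncoherentState {n : ℕ} (ρ : Matrix (Fin n) (Fin n) ℂ) : Prop :=
  IsDensity ρ ∧ ρ.IsDiag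

/-- `C_ν(ρ) = min {ν(ρ - σ) : σ ∈ I_n}` (as an infimum). -/
def distC {n : ℕ} (ν : Matrix (Fin n) (Fin n) ℂ → ℝ) (ρ : Matrix (Fin n) (Fin n) ℂ) : ℝ :=
  sInf {x | ∃ σ, IsIncoherentState σ ∧ x = ν (ρ - σ)}

/-- A set of incoherent Kraus operators `K_j : M_{m,n}`:
`∑ K_j† K_j = I` and each `K_j σ K_j†` is diagonal for diagonal densities `σ`. -/
def IsIncoherentKraus {m n r : ℕ} (K : Fin r → Matrix (Fin m) (Fin n) ℂ) : Prop :=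
  (∑ j, (K j)ᴴ * K j) = 1 ∧
  ∀ j (σ : Matrix (Fin n) (Fin n) ℂ), IsIncoherentState σ → (K j * σ * (K j)ᴴ).IsDiag

/-- A family of candidate coherence measures, one for each dimension. -/
abbrev CFam := ∀ n : ℕ, Matrix (Fin n) (Fin n) ℂ → ℝ

/-- Condition (B1) = (C1): nonnegativity, vanishing exactly on incoherent states. -/
def CondB1 (C : CFam) : Prop :=
  ∀ n (ρ : Matrix (Fin n) (Fin n) ℂ), IsDensity ρ →
    0 ≤ C n ρ ∧ (C n ρ = 0 ↔ IsIncoherentState ρ)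

/-- Condition (B2) = (C2): monotonicity under incoherent operations. -/
def CondB2 (C : CFam) : Prop :=
  ∀ (n m r : ℕ) (K : Fin r → Matrix (Fin m) (Fin n) ℂ), IsIncoherentKraus K →
    ∀ ρ, IsDensity ρ → C m (∑ j, K j * ρ * (K j)ᴴ) ≤ C n ρ

/-- Condition (B3): monotonicity on average under selective incoherent operations. -/
def CondB3 (C : CFam) : Prop :=
  ∀ (n m r : ℕ) (K : Fin r → Matrix (Fin m) (Fin n) ℂ), IsIncoherentKraus K →
    ∀ ρ, IsDensity ρ →
      ∑ j, ((K j * ρ * (K j)ᴴ).trace).re *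
          C m (((((K j * ρ * (K j)ᴴ).trace).re)⁻¹ : ℂ) • (K j * ρ * (K j)ᴴ)) ≤ C n ρ

/-- Condition (B4): convexity. -/
def CondB4 (C : CFam) : Prop :=
  ∀ (n r : ℕ) (ρ : Fin r → Matrix (Fin n) (Fin n) ℂ) (p : Fin r → ℝ),
    (∀ j, IsDensity (ρ j)) → (∀ j, 0 ≤ p j) → (∑ j, p j) = 1 →
    C n (∑ j, (p j : ℂ) • ρ j) ≤ ∑ j, p j * C n (ρ j)

/-- Block diagonal direct sum of two square matrices, reindexed to `Fin (n₁ + n₂)`. -/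
def dirSum {n₁ n₂ : ℕ} (A : Matrix (Fin n₁) (Fin n₁) ℂ) (B : Matrix (Fin n₂) (Fin n₂) ℂ) :
    Matrix (Fin (n₁ + n₂)) (Fin (n₁ + n₂)) ℂ :=
  (Matrix.fromBlocks A 0 0 B).submatrix finSumFinEquiv.symm finSumFinEquiv.symm

/-- Condition (C3): additivity under direct sum convex combinations. -/
def CondC3 (C : CFam) : Prop :=
  ∀ (n₁ n₂ : ℕ) (ρ₁ : Matrix (Fin n₁) (Fin n₁) ℂ) (ρ₂ : Matrix (Fin n₂) (Fin n₂) ℂ)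
    (p₁ p₂ : ℝ), IsDensity ρ₁ → IsDensity ρ₂ → 0 ≤ p₁ → 0 ≤ p₂ → p₁ + p₂ = 1 →
    C (n₁ + n₂) (dirSum ((p₁ : ℂ) • ρ₁) ((p₂ : ℂ) • ρ₂)) = p₁ * C n₁ ρ₁ + p₂ * C n₂ ρ₂

/-- A norm on `M_n(ℂ)` (nonnegativity is automatic). -/
def IsMatrixNorm {n : ℕ} (ν : Matrix (Fin n) (Fin n) ℂ → ℝ) : Prop :=
  (∀ A, ν A = 0 ↔ A = 0) ∧ (∀ (c : ℂ) A, ν (c • A) = ‖c‖ * ν A) ∧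
  (∀ A B, ν (A + B) ≤ ν A + ν B)


lemma lpV_nonneg (p : ℝ≥0∞) {n : ℕ} (v : Fin n → ℂ) : 0 ≤ lpV p v := by
  unfold lpV
  split
  · exact Real.iSup_nonneg fun i => norm_nonneg _
  · exact Real.rpow_nonneg (Finset.sum_nonneg fun i _ => Real.rpow_nonneg (norm_nonneg _) _) _

lemma lpV_smul (p : ℝ≥0∞) (hp : 1 ≤ p) {n : ℕ} (v : Fin n → ℂ) {c : ℝ} (hc : 0 ≤ c) :
    lpV p (fun i => (c : ℂ) * v i) = c * lpV p v := by
  unfold lpV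
  split
  · simp only [norm_mul, Complex.norm_real, Real.norm_eq_abs, abs_of_nonneg hc]
    exact (Real.mul_iSup_of_nonneg hc _).symm
  · rename_i hne
    have hq : 0 < p.toReal := ENNReal.toReal_pos (by positivity) hne
    simp only [norm_mul, Complex.norm_real, Real.norm_eq_abs, abs_of_nonneg hc,
      Real.mul_rpow hc (norm_nonneg _)]
    rw [← Finset.mul_sum, Real.mul_rpow (by positivity)
      (Finset.sum_nonneg fun i _ => Real.rpow_nonneg (norm_nonneg _) _),
      ← Real.rpow_mul hc, mul_one_div_cancel hq.ne', Real.rpow_one]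

lemma lpV_pos (p : ℝ≥0∞) (hp : 1 ≤ p) {n : ℕ} {v : Fin n → ℂ} (hv : v ≠ 0) :
    0 < lpV p v := by
  obtain ⟨i, hi⟩ : ∃ i, v i ≠ 0 := by
    by_contra h; push_neg at h; exact hv (funext h)
  unfold lpV
  split
  · exact lt_of_lt_of_le (norm_pos_iff.2 hi)
      (le_ciSup (f := fun i => ‖v i‖) (Set.Finite.bddAbove (Set.finite_range _)) i)
  · rename_i hne
    have hq : 0 < p.toReal := ENNReal.toReal_pos (by positivity) hne
    apply Real.rpow_pos_of_pos
    apply Finset.sum_pos' (fun j _ => Real.rpow_nonneg (norm_nonneg _) _)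
    exact ⟨i, Finset.mem_univ i, Real.rpow_pos_of_pos (norm_pos_iff.2 hi) _⟩

lemma lpV_zero (p : ℝ≥0∞) (hp : 1 ≤ p) {n : ℕ} : lpV p (0 : Fin n → ℂ) = 0 := by
  have := lpV_smul p hp (0 : Fin n → ℂ) (le_refl (0:ℝ))
  have h2 : lpV p (fun _ : Fin n => (0:ℂ)) = 0 := by simpa using this
  exact h2

lemma lqp_one (p : ℝ≥0∞) {m n : ℕ} (A : Matrix (Fin m) (Fin n) ℂ) :
    lqp 1 p A = ∑ j, lpV p (fun i => A i j) := by
  unfold lqp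
  unfold lpV
  simp only [if_neg (by norm_num : (1:ℝ≥0∞) ≠ ∞), ENNReal.toReal_one, Real.rpow_one, div_one,
    Complex.norm_real, Real.norm_eq_abs]
  exact Finset.sum_congr rfl fun j _ => abs_of_nonneg (by
    by_cases h : p = ∞
    · simp only [if_pos h]; exact Real.iSup_nonneg fun i => norm_nonneg _
    · simp only [if_neg h]
      exact Real.rpow_nonneg (Finset.sum_nonneg fun i _ => Real.rpow_nonneg (norm_nonneg _) _) _)

lemma lpV_single (p : ℝ≥0∞) (hp : 1 ≤ p) {n : ℕ} (i0 : Fin n) :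
    lpV p (fun i => if i = i0 then (1:ℂ) else 0) = 1 := by
  unfold lpV
  split
  · apply le_antisymm
    · refine Real.iSup_le (fun i => ?_) zero_le_one
      by_cases h : i = i0 <;> simp [h]
    · calc (1:ℝ) = ‖if i0 = i0 then (1:ℂ) else 0‖ := by simp
        _ ≤ _ := le_ciSup (f := fun i => ‖if i = i0 then (1:ℂ) else 0‖)
            (Set.Finite.bddAbove (Set.finite_range _)) i0
  · rename_i hne
    have hq : 0 < p.toReal := ENNReal.toReal_pos (by positivity) hne
    have : ∀ i : Fin n, ‖if i = i0 then (1:ℂ) else 0‖ ^ p.toReal = if i = i0 then 1 else 0 := by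
      intro i; split <;> simp [Real.zero_rpow hq.ne']
    simp only [this, Finset.sum_ite_eq', Finset.mem_univ, if_pos, Real.one_rpow]


/-- for `p ∈ [1,∞]` and `n ≥ 1`, an extreme point of the unit ball of the
`ℓ_{1,p}`-norm on `M_n(ℂ)` has exactly one nonzero column. -/
theorem extreme_point_of_l1p_ball_one_column (p : ℝ≥0∞) (hp : 1 ≤ p) (n : ℕ) (hn : 0 < n)
    (B : Matrix (Fin n) (Fin n) ℂ)
    (hB : B ∈ Set.extremePoints ℝ {A : Matrix (Fin n) (Fin n) ℂ | lqp 1 p A ≤ 1}) :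
    ∃! j : Fin n, (fun i => B i j) ≠ 0 := by
  obtain ⟨hBmem, hBext⟩ := hB
  simp only [Set.mem_setOf_eq] at hBmem
  have hnorm : lqp 1 p B = ∑ j, lpV p (fun i => B i j) := lqp_one p B
  -- B is nonzero
  have hB0 : B ≠ 0 := by
    rintro rfl
    set i0 : Fin n := ⟨0, hn⟩
    set X : Matrix (Fin n) (Fin n) ℂ := Matrix.of (fun i j => if i = i0 ∧ j = i0 then 1 else 0)
      with hX
    have hcol : ∀ j, (fun i => X i j) =
        if j = i0 then (fun i => if i = i0 then (1:ℂ) else 0) else 0 := by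
      intro j
      by_cases h : j = i0 <;> ext i <;> simp [hX, h, and_comm]
    have hXn : lqp 1 p X = 1 := by
      rw [lqp_one]
      have : ∀ j : Fin n, lpV p (fun i => X i j) = if j = i0 then 1 else 0 := by
        intro j
        rw [hcol j]
        by_cases h : j = i0 <;> simp [h, lpV_single p hp, lpV_zero p hp]
      simp [this]
    have hXmem : X ∈ {A : Matrix (Fin n) (Fin n) ℂ | lqp 1 p A ≤ 1} := by
      simp [Set.mem_setOf_eq, hXn]
    have hXmem' : -X ∈ {A : Matrix (Fin n) (Fin n) ℂ | lqp 1 p A ≤ 1} := by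
      have : lqp 1 p (-X) = lqp 1 p X := by
        rw [lqp_one, lqp_one]
        exact Finset.sum_congr rfl fun j _ => by simp [lpV]
      simp [Set.mem_setOf_eq, this, hXn]
    have hseg : (0 : Matrix (Fin n) (Fin n) ℂ) ∈ openSegment ℝ X (-X) :=
      ⟨1/2, 1/2, by norm_num, by norm_num, by norm_num, by module⟩
    have h := hBext hXmem hXmem' hseg
    have := congrFun (congrFun h i0) i0
    simp [hX] at this
  obtain ⟨i, j₁, hij⟩ : ∃ i j, B i j ≠ 0 := by
    by_contra h; push_neg at h; exact hB0 (by ext i j; simp [h])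
  have hcol₁ : (fun i => B i j₁) ≠ 0 := fun h => hij (congrFun h i)
  refine ⟨j₁, hcol₁, ?_⟩
  intro j₂ hcol₂
  by_contra hne
  -- two distinct nonzero columns: contradiction with extremality
  set t : Fin n → ℝ := fun j => lpV p (fun i => B i j) with ht
  have ht₁ : 0 < t j₁ := lpV_pos p hp hcol₁
  have ht₂ : 0 < t j₂ := lpV_pos p hp hcol₂
  set ε : ℝ := min (t j₁) (t j₂) / 2 with hε
  have hεpos : 0 < ε := by positivity
  set s₁ : ℝ := ε / t j₁ with hs₁
  set s₂ : ℝ := ε / t j₂ with hs₂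
  have hs₁pos : 0 < s₁ := by positivity
  have hs₂pos : 0 < s₂ := by positivity
  have hs₁le : s₁ ≤ 1 := by
    rw [hs₁, div_le_one ht₁]
    calc ε ≤ t j₁ / 2 := by rw [hε]; gcongr; exact min_le_left _ _
      _ ≤ t j₁ := by linarith
  have hs₂le : s₂ ≤ 1 := by
    rw [hs₂, div_le_one ht₂]
    calc ε ≤ t j₂ / 2 := by rw [hε]; gcongr; exact min_le_right _ _
      _ ≤ t j₂ := by linarith
  set f : Fin n → ℝ := fun j => 1 + (if j = j₂ then s₂ else 0) - (if j = j₁ then s₁ else 0)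
    with hf
  have hf0 : ∀ j, 0 ≤ f j := by
    intro j
    rw [hf]; dsimp only
    split <;> split <;> linarith
  have hf2 : ∀ j, 0 ≤ 2 - f j := by
    intro j
    rw [hf]; dsimp only
    split <;> split <;> linarith
  set X₁ : Matrix (Fin n) (Fin n) ℂ := Matrix.of (fun i j => (f j : ℂ) * B i j) with hX₁
  set X₂ : Matrix (Fin n) (Fin n) ℂ := Matrix.of (fun i j => ((2 - f j : ℝ) : ℂ) * B i j)
    with hX₂
  have sum_ite : ∀ (j0 : Fin n) (c : ℝ),
      ∑ j, (if j = j0 then c else 0) * t j = c * t j0 := by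
    intro j0 c
    rw [Finset.sum_eq_single j0]
    · simp
    · intro b _ hb; simp [hb]
    · intro h; exact absurd (Finset.mem_univ j0) h
  have hsum : ∀ a : ℝ, ∑ j, (1 + a * ((if j = j₂ then s₂ else 0) - (if j = j₁ then s₁ else 0)))
      * t j = ∑ j, t j := by
    intro a
    have : ∀ j, (1 + a * ((if j = j₂ then s₂ else 0) - (if j = j₁ then s₁ else 0))) * t j
        = t j + a * ((if j = j₂ then s₂ else 0) * t j) - a * ((if j = j₁ then s₁ else 0) * t j) := by
      intro j; ring
    simp only [this]
    rw [Finset.sum_sub_distrib, Finset.sum_add_distrib, ← Finset.mul_sum, ← Finset.mul_sum,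
      sum_ite, sum_ite]
    have e₁ : s₁ * t j₁ = ε := div_mul_cancel₀ ε ht₁.ne'
    have e₂ : s₂ * t j₂ = ε := div_mul_cancel₀ ε ht₂.ne'
    rw [e₁, e₂]; ring
  have hnX₁ : lqp 1 p X₁ = ∑ j, t j := by
    rw [lqp_one]
    have : ∀ j : Fin n, lpV p (fun i => X₁ i j) = f j * t j := by
      intro j
      exact lpV_smul p hp (fun i => B i j) (hf0 j)
    simp only [this]
    have := hsum 1
    simpa [hf, one_mul, add_sub_assoc] using this
  have hnX₂ : lqp 1 p X₂ = ∑ j, t j := by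
    rw [lqp_one]
    have : ∀ j : Fin n, lpV p (fun i => X₂ i j) = (2 - f j) * t j := by
      intro j
      exact lpV_smul p hp (fun i => B i j) (hf2 j)
    simp only [this]
    have := hsum (-1)
    have h2 : ∀ j, (2 - f j) = 1 + (-1) * ((if j = j₂ then s₂ else 0) - (if j = j₁ then s₁ else 0)) := by
      intro j; rw [hf]; ring
    simp only [h2]
    exact this
  have hle : ∑ j, t j ≤ 1 := hnorm ▸ hBmem
  have hX₁mem : X₁ ∈ {A : Matrix (Fin n) (Fin n) ℂ | lqp 1 p A ≤ 1} := by
    simp only [Set.mem_setOf_eq, hnX₁]; exact hle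
  have hX₂mem : X₂ ∈ {A : Matrix (Fin n) (Fin n) ℂ | lqp 1 p A ≤ 1} := by
    simp only [Set.mem_setOf_eq, hnX₂]; exact hle
  have hseg : B ∈ openSegment ℝ X₁ X₂ := by
    refine ⟨1/2, 1/2, by norm_num, by norm_num, by norm_num, ?_⟩
    ext i j
    simp only [Matrix.add_apply, Matrix.smul_apply, hX₁, hX₂, Matrix.of_apply]
    push_cast
    rw [Complex.real_smul, Complex.real_smul]
    push_cast
    ring
  have h := hBext hX₁mem hX₂mem hseg
  have hij1 := congrFun (congrFun h i) j₁
  simp only [hX₁, Matrix.of_apply] at hij1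
  have hfj₁ : f j₁ = 1 - s₁ := by
    rw [hf]; dsimp only; rw [if_neg (Ne.symm hne), if_pos rfl]; ring
  rw [hfj₁] at hij1
  have hc : ((1 - s₁ : ℝ) : ℂ) = ((1 : ℝ) : ℂ) := by
    have := mul_right_cancel₀ hij (hij1.trans (one_mul (B i j₁)).symm)
    simpa using this
  have : (1 - s₁ : ℝ) = 1 := Complex.ofReal_inj.mp hc
  linarith

end
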